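/- The function R_off(λ) = (w·c_m + λ)/(w·c_m + (c_o/(p_max + η·c_g))·λ) satisfies R_off(λ) < (p_max + η·c_g)/c_o for all λ ≥ 0, and R_off(λ) tends to (p_max + η·c_g)/c_o as λ → ∞. -/

import Mathlib

theorem Roff_bound_and_limit (w c_m c_o c_g η p_max : ℝ)
    (hw : 0 < w) (hcm : 0 < c_m) (hco : 0 < c_o) (hcg : 0 < c_g)
    (hη : 0 < η) (hp : 0 < p_max) (hlt : c_o < p_max + η * c_g) :
    (∀ lam : ℝ, 0 ≤ lam →
      (w * c_m + lam) / (w * c_m + (c_o / (p_max + η * c_g)) * lam)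
        < (p_max + η * c_g) / c_o) ∧
    Filter.Tendsto
      (fun lam : ℝ =>
        (w * c_m + lam) / (w * c_m + (c_o / (p_max + η * c_g)) * lam))
      Filter.atTop (nhds ((p_max + η * c_g) / c_o)) := by
  have hP : (0:ℝ) < p_max + η * c_g := lt_trans hco hlt
  have ha : (0:ℝ) < w * c_m := mul_pos hw hcm
  have hk : (0:ℝ) < c_o / (p_max + η * c_g) := div_pos hco hP
  have hkey : (p_max + η * c_g) * (c_o / (p_max + η * c_g)) = c_o :=
    mul_div_cancel₀ _ (ne_of_gt hP)
  constructor
  · intro lam hlam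
    have hden : 0 < w * c_m + (c_o / (p_max + η * c_g)) * lam := by positivity
    rw [div_lt_div_iff₀ hden hco]
    nlinarith [mul_nonneg (le_of_lt hk) hlam]
  · have hkne : (c_o / (p_max + η * c_g)) ≠ 0 := ne_of_gt hk
    have h1 : Filter.Tendsto (fun lam : ℝ => (w * c_m) * lam⁻¹ + 1)
        Filter.atTop (nhds 1) := by
      have := (tendsto_inv_atTop_zero (𝕜 := ℝ)).const_mul (w * c_m)
      simpa using this.add_const 1
    have h2 : Filter.Tendsto (fun lam : ℝ => (w * c_m) * lam⁻¹ + (c_o / (p_max + η * c_g)))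
        Filter.atTop (nhds (c_o / (p_max + η * c_g))) := by
      have := (tendsto_inv_atTop_zero (𝕜 := ℝ)).const_mul (w * c_m)
      simpa using this.add_const (c_o / (p_max + η * c_g))
    have h3 := h1.div h2 hkne
    have heq : (1 : ℝ) / (c_o / (p_max + η * c_g)) = (p_max + η * c_g) / c_o := by
      rw [one_div, inv_div]
    rw [heq] at h3
    refine h3.congr' ?_
    filter_upwards [Filter.eventually_gt_atTop (0:ℝ)] with lam hlam
    have hlne : lam ≠ 0 := ne_of_gt hlam
    simp only [Pi.div_apply]
    field_simp
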